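/- Assume CH, and let ≺ be a well-ordering of [0,1] in order type ω₁ (so every proper initial segment is countable). Let μ be Lebesgue measure on [0,1] and 𝒞 the class of all initial segments I_y. Then for every n and every finite set σ = {x₁,…,xₙ} ⊆ [0,1] that is not cofinal in ≺, there exists C ∈ 𝒞 with σ ⊆ C and μ(C) = 0, while the empirical measure of C on σ equals 1. Consequently, for any ε < 1, sup_{C ∈ 𝒞} |μₙ(C) − μ(C)| ≥ 1 for every sample, so 𝒞 is not a uniform Glivenko–Cantelli class with respect to Lebesgue measure. -/

import Mathlib

open MeasureTheory Set

/-- Empirical measure of the set `C` on a sample `σ` of size `n`. -/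
noncomputable def empMeas {Ω : Type*} (n : ℕ) (σ : Fin n → Ω) (C : Set Ω) : ℝ :=
  (Nat.card {i : Fin n // σ i ∈ C} : ℝ) / n

/-- `n₀` is a uniform Glivenko–Cantelli sample-complexity bound for `𝒞`
at accuracy `ε` and confidence `δ`, with respect to the family `P` of measures
(outer probabilities are used). -/
def GoodBound {Ω : Type*} [MeasurableSpace Ω] (P : Set (Measure Ω)) (ε δ : ℝ)
    (𝒞 : Set (Set Ω)) (n₀ : ℕ) : Prop :=
  ∀ n : ℕ, n₀ ≤ n → ∀ μ ∈ P,
    (Measure.pi fun _ : Fin n => μ)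
      {σ : Fin n → Ω | ε ≤ ⨆ C ∈ 𝒞, |empMeas n σ C - (μ C).toReal|} ≤ ENNReal.ofReal δ

/-- `𝒞` is a uniform Glivenko–Cantelli class with respect to `P`. -/
def IsUGC {Ω : Type*} [MeasurableSpace Ω] (𝒞 : Set (Set Ω)) (P : Set (Measure Ω)) : Prop :=
  ∀ ε : ℝ, 0 < ε → ∀ δ : ℝ, 0 < δ → ∃ n₀ : ℕ, GoodBound P ε δ 𝒞 n₀

/-- Any finite sample is non-cofinal in a well-order of `[0,1]` with countable
initial segments. -/
lemma aux_noncofinal (r : ↥(Set.Icc (0:ℝ) 1) → ↥(Set.Icc (0:ℝ) 1) → Prop)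
    (hwo : IsWellOrder ↥(Set.Icc (0:ℝ) 1) r)
    (hcount : ∀ y, {x | r x y}.Countable)
    (n : ℕ) (σ : Fin n → ↥(Set.Icc (0:ℝ) 1)) : ∃ y, ∀ i, r (σ i) y := by
  have huncount : ¬ (univ : Set ↥(Set.Icc (0:ℝ) 1)).Countable := by
    rw [Set.countable_univ_iff, ← Cardinal.mk_le_aleph0_iff, Cardinal.mk_Icc_real one_pos]
    exact fun h => absurd (h.trans_lt Cardinal.aleph0_lt_continuum |>.ne rfl) (by simp)
  set S : Set ↥(Set.Icc (0:ℝ) 1) := (⋃ i, {x | r x (σ i)}) ∪ Set.range σ with hS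
  have hSc : S.Countable := ((Set.countable_iUnion fun i => hcount (σ i)).union
    (Set.countable_range σ))
  have hne : S ≠ univ := fun h => huncount (h ▸ hSc)
  obtain ⟨z, hz⟩ : ∃ z, z ∉ S := by
    by_contra h; push_neg at h; exact hne (Set.eq_univ_of_forall h)
  refine ⟨z, fun i => ?_⟩
  rcases (haveI := hwo; trichotomous_of r z (σ i)) with h | h | h
  · exact absurd (Set.mem_union_left _ (Set.mem_iUnion.2 ⟨i, h⟩)) hz
  · exact absurd (Set.mem_union_right _ (Set.mem_range.2 ⟨i, h.symm⟩)) hz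
  · exact h

/-- A countable subset of `[0,1]` has Lebesgue measure zero. -/
lemma aux_vol_zero {C : Set ↥(Set.Icc (0:ℝ) 1)} (hC : C.Countable) : volume C = 0 := by
  rw [unitInterval.volume_def,
    (MeasurableEmbedding.subtype_coe measurableSet_Icc).comap_apply]
  exact (hC.image _).measure_zero _

/-- If all sample points are in `C`, the empirical measure is one. -/
lemma aux_emp_one {n : ℕ} (hn : 0 < n) (σ : Fin n → ↥(Set.Icc (0:ℝ) 1))
    {C : Set ↥(Set.Icc (0:ℝ) 1)} (hC : ∀ i, σ i ∈ C) : empMeas n σ C = 1 := by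
  have : Nat.card {i : Fin n // σ i ∈ C} = n := by
    rw [Nat.card_eq_of_bijective Subtype.val
      ⟨Subtype.val_injective, fun i => ⟨⟨i, hC i⟩, rfl⟩⟩, Nat.card_eq_fintype_card,
      Fintype.card_fin]
  rw [empMeas, this, div_self (by exact_mod_cast hn.ne')]

/-- The empirical measure takes values in `[0, 1]`. -/
lemma aux_emp_le {n : ℕ} (σ : Fin n → ↥(Set.Icc (0:ℝ) 1)) (C : Set ↥(Set.Icc (0:ℝ) 1)) :
    0 ≤ empMeas n σ C ∧ empMeas n σ C ≤ 1 := by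
  constructor
  · exact div_nonneg (Nat.cast_nonneg _) (Nat.cast_nonneg _)
  · rcases Nat.eq_zero_or_pos n with h | h
    · simp [empMeas, h]
    · rw [empMeas, div_le_one (by exact_mod_cast h)]
      have := Nat.card_le_card_of_injective
        (Subtype.val : {i : Fin n // σ i ∈ C} → Fin n) Subtype.val_injective
      simp only [Nat.card_eq_fintype_card, Fintype.card_fin] at this
      exact_mod_cast this

/-- The deviation is bounded by 2. -/
lemma aux_dev_le (n : ℕ) (σ : Fin n → ↥(Set.Icc (0:ℝ) 1)) (C : Set ↥(Set.Icc (0:ℝ) 1)) :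
    |empMeas n σ C - (volume C).toReal| ≤ 2 := by
  have h1 := aux_emp_le σ C
  have h2 : (volume C).toReal ≤ 1 := by
    have := prob_le_one (μ := (volume : Measure ↥(Set.Icc (0:ℝ) 1))) (s := C)
    simpa using ENNReal.toReal_mono ENNReal.one_ne_top this
  have h3 : (0:ℝ) ≤ (volume C).toReal := ENNReal.toReal_nonneg
  rw [abs_le]; constructor <;> nlinarith [h1.1, h1.2]

theorem dudley_durst_example
    (hCH : Cardinal.continuum = Cardinal.aleph 1)
    (r : ↥(Set.Icc (0:ℝ) 1) → ↥(Set.Icc (0:ℝ) 1) → Prop)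
    (hwo : IsWellOrder ↥(Set.Icc (0:ℝ) 1) r)
    (hcount : ∀ y, {x | r x y}.Countable)
    (𝒞 : Set (Set ↥(Set.Icc (0:ℝ) 1)))
    (h𝒞 : 𝒞 = {C | ∃ y, C = {x | r x y}}) :
    (∀ (n : ℕ) (σ : Fin n → ↥(Set.Icc (0:ℝ) 1)), (∃ y, ∀ i, r (σ i) y) →
      ∃ C ∈ 𝒞, (∀ i, σ i ∈ C) ∧ volume C = 0 ∧ (0 < n → empMeas n σ C = 1)) ∧
    (∀ (n : ℕ) (σ : Fin n → ↥(Set.Icc (0:ℝ) 1)), 0 < n → (∃ y, ∀ i, r (σ i) y) →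
      1 ≤ ⨆ C ∈ 𝒞, |empMeas n σ C - (volume C).toReal|) ∧
    ¬ IsUGC 𝒞 {volume} := by
  -- Part 1
  have part1 : ∀ (n : ℕ) (σ : Fin n → ↥(Set.Icc (0:ℝ) 1)), (∃ y, ∀ i, r (σ i) y) →
      ∃ C ∈ 𝒞, (∀ i, σ i ∈ C) ∧ volume C = 0 ∧ (0 < n → empMeas n σ C = 1) := by
    rintro n σ ⟨y, hy⟩
    refine ⟨{x | r x y}, by rw [h𝒞]; exact ⟨y, rfl⟩, hy, aux_vol_zero (hcount y),
      fun hn => aux_emp_one hn σ hy⟩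
  -- Part 2
  have part2 : ∀ (n : ℕ) (σ : Fin n → ↥(Set.Icc (0:ℝ) 1)), 0 < n → (∃ y, ∀ i, r (σ i) y) →
      1 ≤ ⨆ C ∈ 𝒞, |empMeas n σ C - (volume C).toReal| := by
    intro n σ hn hy
    obtain ⟨C₀, hC₀, hmem, hvol, hemp⟩ := part1 n σ hy
    have hg : ∀ C, (⨆ _ : C ∈ 𝒞, |empMeas n σ C - (volume C).toReal|) ≤ 2 := by
      intro C
      by_cases h : C ∈ 𝒞
      · haveI : Nonempty (C ∈ 𝒞) := ⟨h⟩
        rw [ciSup_const]; exact aux_dev_le n σ C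
      · haveI : IsEmpty (C ∈ 𝒞) := ⟨h⟩
        rw [Real.iSup_of_isEmpty _]; norm_num
    refine le_ciSup_of_le ⟨2, ?_⟩ C₀ ?_
    · rintro x ⟨C, rfl⟩; exact hg C
    · haveI : Nonempty (C₀ ∈ 𝒞) := ⟨hC₀⟩
      rw [ciSup_const, hemp hn, hvol]
      simp
  refine ⟨part1, part2, ?_⟩
  -- Part 3
  intro hUGC
  obtain ⟨n₀, hb⟩ := hUGC 1 one_pos (1/2) (by norm_num)
  have hbad := hb (n₀ + 1) (Nat.le_succ n₀) volume rfl
  have hset : {σ : Fin (n₀+1) → ↥(Set.Icc (0:ℝ) 1) |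
      (1:ℝ) ≤ ⨆ C ∈ 𝒞, |empMeas (n₀+1) σ C - (volume C).toReal|} = univ := by
    refine Set.eq_univ_of_forall fun σ => ?_
    exact part2 (n₀+1) σ (Nat.succ_pos n₀) (aux_noncofinal r hwo hcount (n₀+1) σ)
  rw [hset] at hbad
  have : (Measure.pi fun _ : Fin (n₀+1) => (volume : Measure ↥(Set.Icc (0:ℝ) 1))) univ = 1 :=
    measure_univ
  rw [this] at hbad
  have : ¬ ((1:ENNReal) ≤ ENNReal.ofReal (1/2)) := by
    simp [ENNReal.ofReal_lt_one]
  exact this hbad
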